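/- In the setting of the weighted homogeneous pair (f,g), let h(z) = γ_1 z_1^{p(m−n)} + γ_2 z_2^{q(m−n)} with γ_1, γ_2 ∈ ℂ∖{0}, t ∈ ℝ, and F_t = fḡ + t·h. Suppose w ∈ ℂ² and α ∈ ℂ with |α| = 1 satisfy conj(∂F_t/∂z_j(w)) = α·∂F_t/∂z̄_j(w) for j = 1, 2. Then pqm·conj(f(w))·g(w) + pq(m−n)·t·conj(h(w)) = α·pqn·f(w)·conj(g(w)), and consequently F_t(w) = (−n/(m−n))·( f(w)·conj(g(w)) − conj(α)·conj(f(w))·g(w) ). -/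

import Mathlib

open Complex

noncomputable section

/-- The Wirtinger derivative `∂P/∂z_j` at `w`, defined via the real Fréchet derivative:
`∂P/∂z_j = (1/2)(∂P/∂x_j − i ∂P/∂y_j)`. -/
def wD {n : ℕ} (P : (Fin n → ℂ) → ℂ) (j : Fin n) (w : Fin n → ℂ) : ℂ :=
  (1 / 2 : ℂ) *
    (fderiv ℝ P w (Pi.single j 1) - Complex.I * fderiv ℝ P w (Pi.single j Complex.I))

/-- The Wirtinger derivative `∂P/∂z̄_j` at `w`:
`∂P/∂z̄_j = (1/2)(∂P/∂x_j + i ∂P/∂y_j)`. -/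
def wDbar {n : ℕ} (P : (Fin n → ℂ) → ℂ) (j : Fin n) (w : Fin n → ℂ) : ℂ :=
  (1 / 2 : ℂ) *
    (fderiv ℝ P w (Pi.single j 1) + Complex.I * fderiv ℝ P w (Pi.single j Complex.I))

/-- `P : ℂⁿ → ℂ` is a mixed polynomial: a finite sum `Σ c_{ν,μ} z^ν (conj z)^μ`. -/
def IsMixedPoly {n : ℕ} (P : (Fin n → ℂ) → ℂ) : Prop :=
  ∃ c : ((Fin n → ℕ) × (Fin n → ℕ)) →₀ ℂ, ∀ z : Fin n → ℂ,
    P z = c.sum fun νμ a =>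
      a * (∏ j, z j ^ νμ.1 j) * ∏ j, (starRingEnd ℂ) (z j) ^ νμ.2 j

/-- `w` is a singularity of `P` : the gradients (real differentials) of `Re P` and `Im P`
are linearly dependent at `w`. -/
def IsSingularity {n : ℕ} (P : (Fin n → ℂ) → ℂ) (w : Fin n → ℂ) : Prop :=
  ∃ a b : ℝ, ¬(a = 0 ∧ b = 0) ∧
    a • fderiv ℝ (fun z => (P z).re) w + b • fderiv ℝ (fun z => (P z).im) w = 0



lemma diff_eval (P : MvPolynomial (Fin 2) ℂ) :
    Differentiable ℂ (fun z : Fin 2 → ℂ => MvPolynomial.eval z P) := by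
  induction P using MvPolynomial.induction_on with
  | C a => simpa using differentiable_const a
  | add P Q hP hQ => simpa using hP.fun_add hQ
  | mul_X P i hP =>
    simp only [MvPolynomial.eval_mul, MvPolynomial.eval_X]
    exact hP.mul (differentiable_pi.mp differentiable_id i)

lemma euler (p q k : ℕ) (A : (Fin 2 → ℂ) → ℂ) (hA : Differentiable ℂ A)
    (hhom : ∀ c : ℂ, c ≠ 0 → ∀ z : Fin 2 → ℂ, A ![c ^ q * z 0, c ^ p * z 1] = c ^ k * A z)
    (w : Fin 2 → ℂ) :
    (q : ℂ) * w 0 * fderiv ℂ A w (Pi.single 0 1) +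
      (p : ℂ) * w 1 * fderiv ℂ A w (Pi.single 1 1) = (k : ℂ) * A w := by
  have hw : ![w 0, w 1] = w := by funext i; fin_cases i <;> rfl
  have hγ : HasDerivAt (fun c : ℂ => ![c ^ q * w 0, c ^ p * w 1]) ![(q : ℂ) * w 0, (p : ℂ) * w 1] 1 := by
    rw [hasDerivAt_pi]
    intro i
    fin_cases i
    · simpa using (hasDerivAt_pow q (1:ℂ)).mul_const (w 0)
    · simpa using (hasDerivAt_pow p (1:ℂ)).mul_const (w 1)
  have hφ : HasDerivAt (fun c : ℂ => A ![c ^ q * w 0, c ^ p * w 1])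
      (fderiv ℂ A w ![(q : ℂ) * w 0, (p : ℂ) * w 1]) 1 := by
    have hw1 : ![(1:ℂ) ^ q * w 0, (1:ℂ) ^ p * w 1] = w := by
      funext i; fin_cases i <;> simp
    have hA' : HasFDerivAt A (fderiv ℂ A w) ![(1:ℂ) ^ q * w 0, (1:ℂ) ^ p * w 1] := by
      rw [hw1]; exact (hA w).hasFDerivAt
    exact hA'.comp_hasDerivAt 1 hγ
  have hψ : HasDerivAt (fun c : ℂ => c ^ k * A w) ((k : ℂ) * A w) 1 := by
    simpa using (hasDerivAt_pow k (1:ℂ)).mul_const (A w)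
  have heq : (fun c : ℂ => A ![c ^ q * w 0, c ^ p * w 1]) =ᶠ[nhds (1:ℂ)]
      (fun c : ℂ => c ^ k * A w) := by
    filter_upwards [isOpen_ne.mem_nhds (by norm_num : (1:ℂ) ≠ 0)] with c hc
    rw [hhom c hc w]
  have hkey : fderiv ℂ A w ![(q : ℂ) * w 0, (p : ℂ) * w 1] = (k : ℂ) * A w :=
    (hφ.congr_of_eventuallyEq heq.symm).unique hψ ▸ rfl
  rw [← hkey]
  have hv : ![(q : ℂ) * w 0, (p : ℂ) * w 1]
      = ((q : ℂ) * w 0) • (Pi.single 0 1 : Fin 2 → ℂ) + ((p : ℂ) * w 1) • (Pi.single 1 1 : Fin 2 → ℂ) := by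
    funext i; fin_cases i <;> simp
  rw [hv, map_add, map_smul, map_smul]
  simp [smul_eq_mul]

lemma wirtF_aux (A : (Fin 2 → ℂ) → ℂ) (hA : Differentiable ℂ A) (w : Fin 2 → ℂ) (j : Fin 2) :
    HasFDerivAt A ((fderiv ℂ A w).restrictScalars ℝ) w ∧
    fderiv ℂ A w (Pi.single j I) = I * fderiv ℂ A w (Pi.single j 1) := by
  refine ⟨(hA w).hasFDerivAt.restrictScalars ℝ, ?_⟩
  have h1 : (Pi.single j I : Fin 2 → ℂ) = I • (Pi.single j 1 : Fin 2 → ℂ) := by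
    funext i; by_cases hij : i = j <;> simp [hij, Pi.single_apply]
  rw [h1, map_smul, smul_eq_mul]

lemma wirtF (A B H : (Fin 2 → ℂ) → ℂ) (hA : Differentiable ℂ A) (hB : Differentiable ℂ B)
    (hH : Differentiable ℂ H) (t : ℝ) (w : Fin 2 → ℂ) (j : Fin 2) :
    wD (fun z => A z * (starRingEnd ℂ) (B z) + (t : ℂ) * H z) j w
      = fderiv ℂ A w (Pi.single j 1) * (starRingEnd ℂ) (B w)
          + (t : ℂ) * fderiv ℂ H w (Pi.single j 1)
    ∧ wDbar (fun z => A z * (starRingEnd ℂ) (B z) + (t : ℂ) * H z) j w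
      = A w * (starRingEnd ℂ) (fderiv ℂ B w (Pi.single j 1)) := by
  obtain ⟨hA', hAI⟩ := wirtF_aux A hA w j
  obtain ⟨hB', hBI⟩ := wirtF_aux B hB w j
  obtain ⟨hH', hHI⟩ := wirtF_aux H hH w j
  have hconjB : HasFDerivAt (fun z => (starRingEnd ℂ) (B z))
      ((conjCLE.toContinuousLinearMap).comp ((fderiv ℂ B w).restrictScalars ℝ)) w :=
    (conjCLE.toContinuousLinearMap.hasFDerivAt (x := B w)).comp w hB'
  have key := ((hA'.mul hconjB).add (hH'.const_mul (t : ℂ))).fderiv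
  set a1 := fderiv ℂ A w (Pi.single j 1)
  set b1 := fderiv ℂ B w (Pi.single j 1)
  set c1 := fderiv ℂ H w (Pi.single j 1)
  have comp : ∀ v : Fin 2 → ℂ,
      fderiv ℝ (fun z => A z * (starRingEnd ℂ) (B z) + (t : ℂ) * H z) w v
      = A w * (starRingEnd ℂ) (fderiv ℂ B w v) + (starRingEnd ℂ) (B w) * (fderiv ℂ A w v)
          + (t : ℂ) * (fderiv ℂ H w v) := by
    intro v
    rw [show (fun z => A z * (starRingEnd ℂ) (B z) + (t : ℂ) * H z) =
        ((A * fun z => (starRingEnd ℂ) (B z)) + fun y => (t : ℂ) * H y) from rfl, key]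
    simp only [ContinuousLinearMap.add_apply, ContinuousLinearMap.coe_smul',
      ContinuousLinearMap.coe_comp', ContinuousLinearMap.coe_restrictScalars',
      Pi.smul_apply, Function.comp_apply, ContinuousLinearEquiv.coe_coe,
      ContinuousLinearMap.coe_coe, Complex.conjCLE_apply, smul_eq_mul]
  constructor
  · rw [wD, comp, comp, hAI, hBI, hHI]
    simp only [map_mul, Complex.conj_I]
    linear_combination ((1/2 : ℂ) * A w * (starRingEnd ℂ) b1
      - (1/2 : ℂ) * (starRingEnd ℂ) (B w) * a1 - (1/2 : ℂ) * (t : ℂ) * c1) * Complex.I_sq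
  · rw [wDbar, comp, comp, hAI, hBI, hHI]
    simp only [map_mul, Complex.conj_I]
    linear_combination ((-(1/2) : ℂ) * A w * (starRingEnd ℂ) b1
      + (1/2 : ℂ) * (starRingEnd ℂ) (B w) * a1 + (1/2 : ℂ) * (t : ℂ) * c1) * Complex.I_sq
/-- At a singular point `w` of `F_t = fḡ + t·h` (witnessed by `α` on the unit circle),
the Euler-type relation
`pqm·conj(f(w))·g(w) + pq(m−n)·t·conj(h(w)) = α·pqn·f(w)·conj(g(w))` holds, and hence
`F_t(w) = (−n/(m−n))·(f(w)·conj(g(w)) − conj(α)·conj(f(w))·g(w))`. -/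
theorem stmt_14 (p q m n : ℕ) (hp : 0 < p) (hq : 0 < q) (hm : 0 < m) (hn : 0 < n)
    (hmn : n < m) (hpq : p ≤ q)
    (f g : MvPolynomial (Fin 2) ℂ)
    (hf : ∀ c : ℂ, c ≠ 0 → ∀ z : Fin 2 → ℂ,
      MvPolynomial.eval ![c ^ q * z 0, c ^ p * z 1] f =
        c ^ (p * q * m) * MvPolynomial.eval z f)
    (hg : ∀ c : ℂ, c ≠ 0 → ∀ z : Fin 2 → ℂ,
      MvPolynomial.eval ![c ^ q * z 0, c ^ p * z 1] g =
        c ^ (p * q * n) * MvPolynomial.eval z g)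
    (γ₁ γ₂ : ℂ) (hγ₁ : γ₁ ≠ 0) (hγ₂ : γ₂ ≠ 0)
    (h : (Fin 2 → ℂ) → ℂ)
    (hh : h = fun z => γ₁ * z 0 ^ (p * (m - n)) + γ₂ * z 1 ^ (q * (m - n)))
    (t : ℝ)
    (F : (Fin 2 → ℂ) → ℂ)
    (hF : F = fun z =>
      MvPolynomial.eval z f * (starRingEnd ℂ) (MvPolynomial.eval z g) + (t : ℂ) * h z)
    (w : Fin 2 → ℂ) (α : ℂ) (hα : ‖α‖ = 1)
    (hsing : ∀ j : Fin 2, (starRingEnd ℂ) (wD F j w) = α * wDbar F j w) :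
    ((p * q * m : ℕ) : ℂ) * (starRingEnd ℂ) (MvPolynomial.eval w f) *
          MvPolynomial.eval w g +
        ((p * q * (m - n) : ℕ) : ℂ) * (t : ℂ) * (starRingEnd ℂ) (h w) =
      α * ((p * q * n : ℕ) : ℂ) * MvPolynomial.eval w f *
        (starRingEnd ℂ) (MvPolynomial.eval w g) ∧
    F w = (-(n : ℂ) / ((m : ℂ) - (n : ℂ))) *
      (MvPolynomial.eval w f * (starRingEnd ℂ) (MvPolynomial.eval w g) -
        (starRingEnd ℂ) α * (starRingEnd ℂ) (MvPolynomial.eval w f) *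
          MvPolynomial.eval w g) := by
  subst hF hh
  beta_reduce at hsing ⊢
  set E1 := p * (m - n) with hE1
  set E2 := q * (m - n) with hE2
  have hdA : Differentiable ℂ (fun z : Fin 2 → ℂ => MvPolynomial.eval z f) := diff_eval f
  have hdB : Differentiable ℂ (fun z : Fin 2 → ℂ => MvPolynomial.eval z g) := diff_eval g
  have hdH : Differentiable ℂ (fun z : Fin 2 → ℂ => γ₁ * z 0 ^ E1 + γ₂ * z 1 ^ E2) := by
    apply Differentiable.add
    · exact ((differentiable_pi.mp differentiable_id 0).pow E1).const_mul γ₁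
    · exact ((differentiable_pi.mp differentiable_id 1).pow E2).const_mul γ₂
  have hhomH : ∀ c : ℂ, c ≠ 0 → ∀ z : Fin 2 → ℂ,
      (fun z : Fin 2 → ℂ => γ₁ * z 0 ^ E1 + γ₂ * z 1 ^ E2) ![c ^ q * z 0, c ^ p * z 1]
        = c ^ (p * q * (m - n)) * (fun z : Fin 2 → ℂ => γ₁ * z 0 ^ E1 + γ₂ * z 1 ^ E2) z := by
    intro c hc z
    simp only [Matrix.cons_val_zero, Matrix.cons_val_one, Matrix.head_cons]
    rw [mul_pow, mul_pow, ← pow_mul, ← pow_mul, hE1, hE2,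
      show q * (p * (m - n)) = p * q * (m - n) by ring,
      show p * (q * (m - n)) = p * q * (m - n) by ring]
    ring
  -- Euler identities
  have eA := euler p q (p * q * m) (fun z : Fin 2 → ℂ => MvPolynomial.eval z f) hdA hf w
  have eB := euler p q (p * q * n) (fun z : Fin 2 → ℂ => MvPolynomial.eval z g) hdB hg w
  have eH := euler p q (p * q * (m - n))
    (fun z : Fin 2 → ℂ => γ₁ * z 0 ^ E1 + γ₂ * z 1 ^ E2) hdH hhomH w
  -- singularity equations, rewritten with wirtF
  obtain ⟨W10, W20⟩ := wirtF (fun z : Fin 2 → ℂ => MvPolynomial.eval z f)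
    (fun z : Fin 2 → ℂ => MvPolynomial.eval z g)
    (fun z : Fin 2 → ℂ => γ₁ * z 0 ^ E1 + γ₂ * z 1 ^ E2) hdA hdB hdH t w 0
  obtain ⟨W11, W21⟩ := wirtF (fun z : Fin 2 → ℂ => MvPolynomial.eval z f)
    (fun z : Fin 2 → ℂ => MvPolynomial.eval z g)
    (fun z : Fin 2 → ℂ => γ₁ * z 0 ^ E1 + γ₂ * z 1 ^ E2) hdA hdB hdH t w 1
  have s0 := hsing 0
  have s1 := hsing 1
  rw [W10, W20] at s0
  rw [W11, W21] at s1
  have eA' := congrArg (starRingEnd ℂ) eA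
  have eB' := congrArg (starRingEnd ℂ) eB
  have eH' := congrArg (starRingEnd ℂ) eH
  simp only [map_add, map_mul, map_pow, map_natCast, Complex.conj_conj,
    Complex.conj_ofReal] at s0 s1 eA' eB' eH'
  have claim1 : ((p * q * m : ℕ) : ℂ) * (starRingEnd ℂ) (MvPolynomial.eval w f) *
          MvPolynomial.eval w g +
        ((p * q * (m - n) : ℕ) : ℂ) * (t : ℂ) *
          (starRingEnd ℂ) (γ₁ * w 0 ^ E1 + γ₂ * w 1 ^ E2) =
      α * ((p * q * n : ℕ) : ℂ) * MvPolynomial.eval w f *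
        (starRingEnd ℂ) (MvPolynomial.eval w g) := by
    simp only [map_add, map_mul, map_pow, map_natCast]
    linear_combination ((q : ℂ) * (starRingEnd ℂ) (w 0)) * s0
      + ((p : ℂ) * (starRingEnd ℂ) (w 1)) * s1
      - MvPolynomial.eval w g * eA' - (t : ℂ) * eH' + α * MvPolynomial.eval w f * eB'
  refine ⟨claim1, ?_⟩
  have c2 := congrArg (starRingEnd ℂ) claim1
  simp only [map_add, map_mul, map_pow, map_natCast, Complex.conj_conj,
    Complex.conj_ofReal] at c2
  have hpq0 : ((p : ℂ) * q) ≠ 0 := by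
    have h1 : (p : ℂ) ≠ 0 := Nat.cast_ne_zero.mpr hp.ne'
    have h2 : (q : ℂ) ≠ 0 := Nat.cast_ne_zero.mpr hq.ne'
    exact mul_ne_zero h1 h2
  have hmn0 : ((m : ℂ) - (n : ℂ)) ≠ 0 := by
    rw [sub_ne_zero]
    exact_mod_cast hmn.ne'
  push_cast [Nat.cast_sub hmn.le] at c2
  have c3 : (m : ℂ) * MvPolynomial.eval w f * (starRingEnd ℂ) (MvPolynomial.eval w g)
        + ((m : ℂ) - n) * t * (γ₁ * w 0 ^ E1 + γ₂ * w 1 ^ E2)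
      = (starRingEnd ℂ) α * (n : ℂ) * (starRingEnd ℂ) (MvPolynomial.eval w f) *
          MvPolynomial.eval w g := by
    apply mul_left_cancel₀ hpq0
    linear_combination c2
  field_simp
  linear_combination c3

end
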